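/- Let (Ω, μ) be a probability space, X : Ω → ℝ an integrable random variable, α a real number with 0 < α ≤ 1, and η ∈ ℝ a quantile of X at level α, i.e. μ({ω : X(ω) ≥ η}) = α. Then ∫ X·1_{X ≥ η} dμ = ⨅_{s ∈ ℝ} ( α·s + ∫ max(X − s, 0) dμ ), and the infimum is attained at s = η. -/

import Mathlib

open MeasureTheory

/-- CVaR-type identity (population Average-Top-k): if `μ(X ≥ η) = α` with `0 < α ≤ 1`
and `X` is integrable, then `∫ X·1_{X ≥ η} dμ = ⨅ s, (α s + ∫ max (X - s) 0 dμ)`,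
the infimum being attained at `s = η`. -/
theorem stmt_2 {Ω : Type*} [MeasurableSpace Ω] (μ : Measure Ω) [IsProbabilityMeasure μ]
    (X : Ω → ℝ) (hXm : Measurable X) (hXi : Integrable X μ)
    (α : ℝ) (hα0 : 0 < α) (hα1 : α ≤ 1) (η : ℝ)
    (hη : μ {ω | η ≤ X ω} = ENNReal.ofReal α) :
    ((∫ ω, Set.indicator {ω | η ≤ X ω} X ω ∂μ) =
      ⨅ s : ℝ, (α * s + ∫ ω, max (X ω - s) 0 ∂μ)) ∧
    ((∫ ω, Set.indicator {ω | η ≤ X ω} X ω ∂μ) =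
      α * η + ∫ ω, max (X ω - η) 0 ∂μ) := by
  set S : Set Ω := {ω | η ≤ X ω} with hS
  have hSm : MeasurableSet S := measurableSet_le measurable_const hXm
  have hμS : (μ S).toReal = α := by rw [hη, ENNReal.toReal_ofReal hα0.le]
  have hint : ∀ s : ℝ, Integrable (fun ω => max (X ω - s) 0) μ :=
    fun s => by simpa using (hXi.sub (integrable_const s)).pos_part
  have hind1 : Integrable (fun ω => S.indicator (fun _ => (1:ℝ)) ω) μ :=
    (integrable_const (1:ℝ)).indicator hSm
  have hIone : ∫ ω, S.indicator (fun _ => (1:ℝ)) ω ∂μ = α := by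
    rw [integral_indicator_const _ hSm, smul_eq_mul, mul_one, measureReal_def, hμS]
  -- value at η
  have hkey : (∫ ω, S.indicator X ω ∂μ) = α * η + ∫ ω, max (X ω - η) 0 ∂μ := by
    have hpt : ∀ ω, S.indicator X ω
        = max (X ω - η) 0 + η * S.indicator (fun _ => (1:ℝ)) ω := by
      intro ω
      by_cases h : ω ∈ S
      · have hx : η ≤ X ω := h
        rw [Set.indicator_of_mem h, Set.indicator_of_mem h,
          max_eq_left (by linarith)]
        ring
      · have hx : X ω < η := lt_of_not_ge h
        rw [Set.indicator_of_notMem h, Set.indicator_of_notMem h,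
          max_eq_right (by linarith)]
        ring
    calc (∫ ω, S.indicator X ω ∂μ)
        = ∫ ω, (max (X ω - η) 0 + η * S.indicator (fun _ => (1:ℝ)) ω) ∂μ := by
          exact integral_congr_ae (Filter.Eventually.of_forall hpt)
      _ = (∫ ω, max (X ω - η) 0 ∂μ) + η * ∫ ω, S.indicator (fun _ => (1:ℝ)) ω ∂μ := by
          rw [integral_add (hint η) (hind1.const_mul η), integral_const_mul]
      _ = α * η + ∫ ω, max (X ω - η) 0 ∂μ := by rw [hIone]; ring
  refine ⟨?_, hkey⟩
  have hge : ∀ s : ℝ, α * η + (∫ ω, max (X ω - η) 0 ∂μ)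
      ≤ α * s + ∫ ω, max (X ω - s) 0 ∂μ := by
    intro s
    have hmono : (∫ ω, (max (X ω - η) 0 + (η - s) * S.indicator (fun _ => (1:ℝ)) ω) ∂μ)
        ≤ ∫ ω, max (X ω - s) 0 ∂μ := by
      refine integral_mono ((hint η).add (hind1.const_mul (η - s))) (hint s) ?_
      intro ω
      dsimp only
      by_cases h : ω ∈ S
      · have hx : η ≤ X ω := h
        rw [Set.indicator_of_mem h, max_eq_left (by linarith)]
        have : X ω - η + (η - s) * 1 = X ω - s := by ring
        rw [this]
        exact le_max_left _ _
      · have hx : X ω < η := lt_of_not_ge h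
        rw [Set.indicator_of_notMem h, max_eq_right (by linarith)]
        simp [le_max_right]
    rw [integral_add (hint η) (hind1.const_mul (η - s)), integral_const_mul, hIone] at hmono
    linarith
  rw [hkey]
  have hbdd : BddBelow (Set.range fun s : ℝ => α * s + ∫ ω, max (X ω - s) 0 ∂μ) := by
    refine ⟨α * η + ∫ ω, max (X ω - η) 0 ∂μ, ?_⟩
    rintro x ⟨s, rfl⟩
    exact hge s
  exact le_antisymm (le_ciInf hge) (ciInf_le hbdd η)
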